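/- Let H be a closed subspace of a complex Hilbert space L, let T = (T_1, …, T_n) be bounded operators on H and R = (R_1, …, R_n) bounded operators on L such that R_i^* u = T_i^* u for all u ∈ H and all i (i.e., R is a dilation of T), and let q_{ij} (1 ≤ i < j ≤ n) be complex numbers. Then H^q(T) = L^q(R) ∩ H, and the maximal q-commuting piece R^q of R is a dilation of the maximal q-commuting piece T^q of T, i.e., for every u ∈ H^q(T) and every i, (P_{L^q(R)} R_i |_{L^q(R)})^* u = (P_{H^q(T)} T_i |_{H^q(T)})^* u. -/

import Mathlib

/-- The maximal `q`-commuting piece of a tuple `R` on `M`, as a submodule: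
`{ h : (conj(q_{ij}) R_j^* R_i^* − R_i^* R_j^*)(R^α)^* h = 0 for all i < j, α ∈ Λ̃ }`. -/
noncomputable def qPieceSub {M : Type*} [NormedAddCommGroup M] [InnerProductSpace ℂ M]
    [CompleteSpace M] {n : ℕ} (R : Fin n → M →L[ℂ] M) (q : Fin n → Fin n → ℂ) :
    Submodule ℂ M :=
  ⨅ (i : Fin n) (j : Fin n) (_ : i < j) (α : List (Fin n)),
    LinearMap.ker
      (((((starRingEnd ℂ (q i j)) •
            (ContinuousLinearMap.adjoint (R j) * ContinuousLinearMap.adjoint (R i))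
          - ContinuousLinearMap.adjoint (R i) * ContinuousLinearMap.adjoint (R j)) *
          ContinuousLinearMap.adjoint ((α.map R).prod) : M →L[ℂ] M) : M →ₗ[ℂ] M))

theorem qPieceSub_isClosed {M : Type*} [NormedAddCommGroup M] [InnerProductSpace ℂ M]
    [CompleteSpace M] {n : ℕ} (R : Fin n → M →L[ℂ] M) (q : Fin n → Fin n → ℂ) :
    IsClosed ((qPieceSub R q : Submodule ℂ M) : Set M) := by
  rw [qPieceSub]
  simp only [Submodule.coe_iInf]
  exact isClosed_iInter fun i => isClosed_iInter fun j => isClosed_iInter fun _ =>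
    isClosed_iInter fun α => ContinuousLinearMap.isClosed_ker _

/-- The compression of `R i` to the maximal `q`-commuting piece,
`R_i^q = P_{M^q(R)} R_i |_{M^q(R)}`. -/
noncomputable def compressQ {M : Type*} [NormedAddCommGroup M] [InnerProductSpace ℂ M]
    [CompleteSpace M] {n : ℕ} (R : Fin n → M →L[ℂ] M) (q : Fin n → Fin n → ℂ) (i : Fin n) :
    ↥(qPieceSub R q) →L[ℂ] ↥(qPieceSub R q) :=
  haveI : CompleteSpace ↥(qPieceSub R q) := (qPieceSub_isClosed R q).completeSpace_coe
  (Submodule.orthogonalProjectionOnto (qPieceSub R q)).comp ((R i).comp (qPieceSub R q).subtypeL)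

open ContinuousLinearMap

section Aux

variable {M : Type*} [NormedAddCommGroup M] [InnerProductSpace ℂ M] [CompleteSpace M]
  {n : ℕ}

lemma mem_qPieceSub_iff (R : Fin n → M →L[ℂ] M) (q : Fin n → Fin n → ℂ) {v : M} :
    v ∈ qPieceSub R q ↔ ∀ (i j : Fin n), i < j → ∀ α : List (Fin n),
      ((((starRingEnd ℂ (q i j)) • (adjoint (R j) * adjoint (R i))
          - adjoint (R i) * adjoint (R j)) * adjoint ((α.map R).prod)) v = 0) := by
  simp [qPieceSub, Submodule.mem_iInf, LinearMap.mem_ker]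

lemma qPieceSub_adjoint_mem (R : Fin n → M →L[ℂ] M) (q : Fin n → Fin n → ℂ) {v : M}
    (hv : v ∈ qPieceSub R q) (i : Fin n) : adjoint (R i) v ∈ qPieceSub R q := by
  rw [mem_qPieceSub_iff] at hv ⊢
  intro j k hjk α
  have := hv j k hjk (i :: α)
  simpa [List.map_cons, List.prod_cons, mul_apply, adjoint_comp, mul_def] using this

end Aux

section Dil

variable {L : Type*} [NormedAddCommGroup L] [InnerProductSpace ℂ L] [CompleteSpace L]
  (H : Submodule ℂ L) [CompleteSpace ↥H] {n : ℕ}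
  (T : Fin n → ↥H →L[ℂ] ↥H) (R : Fin n → L →L[ℂ] L)

lemma adjoint_prod_dil
    (hdil : ∀ (i : Fin n) (u : ↥H), adjoint (R i) ↑u = ↑(adjoint (T i) u)) :
    ∀ (α : List (Fin n)) (u : ↥H),
      adjoint ((α.map R).prod) ↑u = ↑(adjoint ((α.map T).prod) u)
  | [], u => by simp [ContinuousLinearMap.one_def, ContinuousLinearMap.adjoint_id]
  | (a :: α), u => by
    simp only [List.map_cons, List.prod_cons, mul_def, adjoint_comp, coe_comp',
      Function.comp_apply, comp_apply]
    rw [hdil, adjoint_prod_dil hdil α]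

lemma expr_dil (hdil : ∀ (i : Fin n) (u : ↥H), adjoint (R i) ↑u = ↑(adjoint (T i) u))
    (q : Fin n → Fin n → ℂ) (i j : Fin n) (α : List (Fin n)) (u : ↥H) :
    ((((starRingEnd ℂ (q i j)) • (adjoint (R j) * adjoint (R i))
        - adjoint (R i) * adjoint (R j)) * adjoint ((α.map R).prod)) ↑u : L)
      = ((((starRingEnd ℂ (q i j)) • (adjoint (T j) * adjoint (T i))
        - adjoint (T i) * adjoint (T j)) * adjoint ((α.map T).prod)) u : ↥H) := by
  simp only [ContinuousLinearMap.mul_apply, ContinuousLinearMap.sub_apply, ContinuousLinearMap.smul_apply, Submodule.coe_sub, Submodule.coe_smul]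
  rw [adjoint_prod_dil H T R hdil α u, hdil, hdil, hdil, hdil]

end Dil

lemma adjoint_compressQ_apply {M : Type*} [NormedAddCommGroup M] [InnerProductSpace ℂ M]
    [CompleteSpace M] {n : ℕ} (R : Fin n → M →L[ℂ] M) (q : Fin n → Fin n → ℂ) (i : Fin n)
    (v : ↥(qPieceSub R q)) :
    haveI : CompleteSpace ↥(qPieceSub R q) := (qPieceSub_isClosed R q).completeSpace_coe
    ((ContinuousLinearMap.adjoint (compressQ R q i) v : ↥(qPieceSub R q)) : M)
      = adjoint (R i) (v : M) := by
  haveI : CompleteSpace ↥(qPieceSub R q) := (qPieceSub_isClosed R q).completeSpace_coe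
  have hmem : adjoint (R i) (v : M) ∈ qPieceSub R q :=
    qPieceSub_adjoint_mem R q v.2 i
  rw [compressQ, adjoint_comp, adjoint_comp, Submodule.adjoint_subtypeL,
    Submodule.adjoint_orthogonalProjection]
  simp only [coe_comp', Function.comp_apply, comp_apply, Submodule.subtypeL_apply]
  exact congrArg Subtype.val
    (Submodule.orthogonalProjectionOnto_mem_subspace_eq_self (⟨adjoint (R i) (v : M), hmem⟩ :
      qPieceSub R q))

/-- If `R` on `L` is a dilation of `T` on the closed subspace `H ⊆ L`, then
`H^q(T) = L^q(R) ∩ H`, and the maximal `q`-commuting piece `R^q` is a dilation of `T^q`. -/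
theorem stmt3 {L : Type*} [NormedAddCommGroup L] [InnerProductSpace ℂ L] [CompleteSpace L]
    (H : Submodule ℂ L) [CompleteSpace ↥H]
    {n : ℕ} (T : Fin n → ↥H →L[ℂ] ↥H) (R : Fin n → L →L[ℂ] L) (q : Fin n → Fin n → ℂ)
    (hdil : ∀ (i : Fin n) (u : ↥H),
      ContinuousLinearMap.adjoint (R i) ↑u = ↑(ContinuousLinearMap.adjoint (T i) u)) :
    haveI : CompleteSpace ↥(qPieceSub R q) := (qPieceSub_isClosed R q).completeSpace_coe
    haveI : CompleteSpace ↥(qPieceSub T q) := (qPieceSub_isClosed T q).completeSpace_coe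
    -- `H^q(T) = L^q(R) ∩ H`
    ((qPieceSub T q : Set ↥H) = Subtype.val ⁻¹' (qPieceSub R q : Set L)) ∧
    -- `R^q` is a dilation of `T^q`
    (∀ (i : Fin n) (u : ↥H) (huT : u ∈ qPieceSub T q) (huR : (u : L) ∈ qPieceSub R q),
      ((ContinuousLinearMap.adjoint (compressQ R q i) ⟨(u : L), huR⟩ : ↥(qPieceSub R q)) : L)
        = ((ContinuousLinearMap.adjoint (compressQ T q i) ⟨u, huT⟩ : ↥(qPieceSub T q)) : ↥H)) := by
  constructor
  · ext u
    simp only [SetLike.mem_coe, Set.mem_preimage]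
    rw [mem_qPieceSub_iff, mem_qPieceSub_iff]
    constructor
    · intro h i j hij α
      rw [expr_dil H T R hdil q i j α u, h i j hij α]
      simp
    · intro h i j hij α
      have := h i j hij α
      rw [expr_dil H T R hdil q i j α u] at this
      exact_mod_cast this
  · intro i u huT huR
    have h1 := adjoint_compressQ_apply R q i ⟨(u : L), huR⟩
    have h2 := adjoint_compressQ_apply T q i ⟨u, huT⟩
    rw [h1, h2]
    exact hdil i u
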